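/- arXiv:2512.01565 — 2 statements merged into one kernel-verified Lean document; each statement's English description precedes it below -/
import Mathlib

section
/- Let P be an n×n symmetric positive semidefinite matrix, q ∈ ℝⁿ, G an m×n matrix, h ∈ ℝᵐ, A a p×n matrix, b ∈ ℝᵖ. Suppose x* minimizes (1/2)xᵀPx + qᵀx subject to Gx ≤ h and Ax = b, with KKT multipliers y_I* ≥ 0 (inequalities) and y_E* (equalities) satisfying stationarity Px* + q + Gᵀy_I* + Aᵀy_E* = 0 and complementary slackness. Then for any μ_I ≥ ‖y_I*‖_∞ and μ_E ≥ ‖y_E*‖_∞ and any x ∈ ℝⁿ, φ(x) ≥ φ(x*), where φ(x) = (1/2)xᵀPx + qᵀx + μ_I·Σᵢ max(gᵢᵀx − hᵢ, 0) + μ_E·Σⱼ |aⱼᵀx − bⱼ|. That is, x* minimizes the exact ℓ₁-penalized objective. -/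
open Matrix

theorem exact_l1_penalty_minimizer {n m p : ℕ}
    (P : Matrix (Fin n) (Fin n) ℝ) (q : Fin n → ℝ)
    (G : Matrix (Fin m) (Fin n) ℝ) (h : Fin m → ℝ)
    (A : Matrix (Fin p) (Fin n) ℝ) (b : Fin p → ℝ)
    (hP : P.PosSemidef)
    (xs : Fin n → ℝ) (yI : Fin m → ℝ) (yE : Fin p → ℝ)
    (hstat : P.mulVec xs + q + Gᵀ.mulVec yI + Aᵀ.mulVec yE = 0)
    (hfeasI : ∀ i, G.mulVec xs i ≤ h i)
    (hfeasE : A.mulVec xs = b)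
    (hyI : ∀ i, 0 ≤ yI i)
    (hcs : ∀ i, yI i * (G.mulVec xs i - h i) = 0)
    (μI μE : ℝ) (hμI : ‖yI‖ ≤ μI) (hμE : ‖yE‖ ≤ μE) :
    ∀ x : Fin n → ℝ,
      (1/2) * (xs ⬝ᵥ P.mulVec xs) + q ⬝ᵥ xs
        + μI * ∑ i, max (G.mulVec xs i - h i) 0
        + μE * ∑ j, |A.mulVec xs j - b j|
      ≤ (1/2) * (x ⬝ᵥ P.mulVec x) + q ⬝ᵥ x
        + μI * ∑ i, max (G.mulVec x i - h i) 0
        + μE * ∑ j, |A.mulVec x j - b j| := by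
  intro x
  set d : Fin n → ℝ := x - xs with hd
  have hsym : Pᵀ = P := hP.1
  -- positivity of the quadratic form on d
  have hquad : 0 ≤ d ⬝ᵥ P.mulVec d := by
    have := hP.dotProduct_mulVec_nonneg d
    simpa using this
  -- symmetry of the bilinear form
  have hsd : xs ⬝ᵥ P.mulVec x = x ⬝ᵥ P.mulVec xs := by
    rw [dotProduct_mulVec, ← mulVec_transpose, hsym, dotProduct_comm]
  -- quadratic expansion
  have key : (1/2) * (x ⬝ᵥ P.mulVec x) + q ⬝ᵥ x
      = (1/2) * (xs ⬝ᵥ P.mulVec xs) + q ⬝ᵥ xs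
        + (1/2) * (d ⬝ᵥ P.mulVec d) + (P.mulVec xs + q) ⬝ᵥ d := by
    simp only [hd, mulVec_sub, dotProduct_sub, sub_dotProduct, add_dotProduct,
      dotProduct_comm q]
    rw [hsd]
    simp only [dotProduct_comm (P.mulVec xs)]
    ring
  -- stationarity dotted with d
  have hstatd : (P.mulVec xs + q) ⬝ᵥ d + yI ⬝ᵥ G.mulVec d + yE ⬝ᵥ A.mulVec d = 0 := by
    rw [dotProduct_mulVec yI, ← mulVec_transpose, dotProduct_mulVec yE,
      ← mulVec_transpose, ← add_dotProduct, ← add_dotProduct, hstat, zero_dotProduct]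
  -- inequality penalty bound, pointwise
  have hI : ∀ i, yI i * (G.mulVec d) i ≤ μI * max (G.mulVec x i - h i) 0 := by
    intro i
    have hdi : (G.mulVec d) i = G.mulVec x i - G.mulVec xs i := by
      simp [hd, mulVec_sub]
    have hyle : yI i ≤ μI :=
      le_trans (le_trans (le_abs_self _) (norm_le_pi_norm yI i)) hμI
    have hmax1 : G.mulVec x i - h i ≤ max (G.mulVec x i - h i) 0 := le_max_left _ _
    have hmax2 : (0:ℝ) ≤ max (G.mulVec x i - h i) 0 := le_max_right _ _
    have hc := hcs i
    rw [hdi]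
    nlinarith [hyI i]
  -- equality penalty bound, pointwise
  have hE : ∀ j, yE j * (A.mulVec d) j ≤ μE * |A.mulVec x j - b j| := by
    intro j
    have hdj : (A.mulVec d) j = A.mulVec x j - b j := by
      simp [hd, mulVec_sub, ← hfeasE]
    have hyle : |yE j| ≤ μE :=
      le_trans (norm_le_pi_norm yE j) hμE
    rw [hdj]
    calc yE j * (A.mulVec x j - b j) ≤ |yE j * (A.mulVec x j - b j)| := le_abs_self _
      _ = |yE j| * |A.mulVec x j - b j| := abs_mul _ _
      _ ≤ μE * |A.mulVec x j - b j| :=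
          mul_le_mul_of_nonneg_right hyle (abs_nonneg _)
  have hIsum : yI ⬝ᵥ G.mulVec d ≤ μI * ∑ i, max (G.mulVec x i - h i) 0 := by
    rw [dotProduct, Finset.mul_sum]
    exact Finset.sum_le_sum fun i _ => hI i
  have hEsum : yE ⬝ᵥ A.mulVec d ≤ μE * ∑ j, |A.mulVec x j - b j| := by
    rw [dotProduct, Finset.mul_sum]
    exact Finset.sum_le_sum fun j _ => hE j
  -- penalties vanish at xs
  have hpenI : ∑ i, max (G.mulVec xs i - h i) 0 = 0 := by
    apply Finset.sum_eq_zero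
    intro i _
    exact max_eq_right (by linarith [hfeasI i])
  have hpenE : ∑ j, |A.mulVec xs j - b j| = 0 := by
    apply Finset.sum_eq_zero
    intro j _
    simp [hfeasE]
  simp only [hpenI, hpenE, mul_zero, add_zero]
  linarith
end

section
/- Let (x*, y_I*, y_E*) be a KKT point of the QP and suppose μ_I ≥ ‖y_I*‖_∞ componentwise can be relaxed: if μ_I ∈ ℝᵐ and μ_E ∈ ℝᵖ are vectors of penalty parameters with μ_{I,i} ≥ |y_{I,i}*| for all i and μ_{E,j} ≥ |y_{E,j}*| for all j, then x* minimizes the vector-weighted penalized objective φ(x) = (1/2)xᵀPx + qᵀx + Σᵢ μ_{I,i}·max(gᵢᵀx − hᵢ, 0) + Σⱼ μ_{E,j}·|aⱼᵀx − bⱼ| over ℝⁿ. -/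
open Matrix

theorem exact_l1_penalty_vector_weights {n m p : ℕ}
    (P : Matrix (Fin n) (Fin n) ℝ) (q : Fin n → ℝ)
    (G : Matrix (Fin m) (Fin n) ℝ) (h : Fin m → ℝ)
    (A : Matrix (Fin p) (Fin n) ℝ) (b : Fin p → ℝ)
    (hP : P.PosSemidef)
    (xs : Fin n → ℝ) (yI : Fin m → ℝ) (yE : Fin p → ℝ)
    (hstat : P.mulVec xs + q + Gᵀ.mulVec yI + Aᵀ.mulVec yE = 0)
    (hfeasI : ∀ i, G.mulVec xs i ≤ h i)
    (hfeasE : A.mulVec xs = b)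
    (hyI : ∀ i, 0 ≤ yI i)
    (hcs : ∀ i, yI i * (G.mulVec xs i - h i) = 0)
    (μI : Fin m → ℝ) (μE : Fin p → ℝ)
    (hμI : ∀ i, |yI i| ≤ μI i) (hμE : ∀ j, |yE j| ≤ μE j) :
    ∀ x : Fin n → ℝ,
      (1/2) * (xs ⬝ᵥ P.mulVec xs) + q ⬝ᵥ xs
        + (∑ i, μI i * max (G.mulVec xs i - h i) 0)
        + (∑ j, μE j * |A.mulVec xs j - b j|)
      ≤ (1/2) * (x ⬝ᵥ P.mulVec x) + q ⬝ᵥ x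
        + (∑ i, μI i * max (G.mulVec x i - h i) 0)
        + (∑ j, μE j * |A.mulVec x j - b j|) := by
  intro x
  have hPt : Pᵀ = P := by
    have := hP.1
    exact isHermitian_iff_isSymm.mp this
  -- symmetry of P in the quadratic form
  have hsym : xs ⬝ᵥ P.mulVec x = x ⬝ᵥ P.mulVec xs := by
    rw [dotProduct_mulVec, ← mulVec_transpose, hPt, dotProduct_comm]
  -- convexity inequality
  have hquad : 0 ≤ (x - xs) ⬝ᵥ P.mulVec (x - xs) := by simpa using hP.dotProduct_mulVec_nonneg (x - xs)
  have hconv : (P.mulVec xs + q) ⬝ᵥ (x - xs)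
      ≤ ((1/2) * (x ⬝ᵥ P.mulVec x) + q ⬝ᵥ x)
        - ((1/2) * (xs ⬝ᵥ P.mulVec xs) + q ⬝ᵥ xs) := by
    have hexp : (x - xs) ⬝ᵥ P.mulVec (x - xs)
        = x ⬝ᵥ P.mulVec x - xs ⬝ᵥ P.mulVec x - x ⬝ᵥ P.mulVec xs + xs ⬝ᵥ P.mulVec xs := by
      rw [mulVec_sub, sub_dotProduct, dotProduct_sub, dotProduct_sub]
      ring
    rw [hexp, hsym] at hquad
    have hd : (P.mulVec xs + q) ⬝ᵥ (x - xs)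
        = x ⬝ᵥ P.mulVec xs - xs ⬝ᵥ P.mulVec xs + q ⬝ᵥ x - q ⬝ᵥ xs := by
      rw [add_dotProduct, dotProduct_sub, dotProduct_sub, dotProduct_comm (P.mulVec xs) x,
        dotProduct_comm (P.mulVec xs) xs]
      ring
    rw [hd]
    linarith
  -- stationarity
  have hstat' : P.mulVec xs + q = -(Gᵀ.mulVec yI) - Aᵀ.mulVec yE := by
    funext k
    have := congrFun hstat k
    simp only [Pi.add_apply, Pi.zero_apply, Pi.neg_apply, Pi.sub_apply] at this ⊢
    linarith
  have hdot : (P.mulVec xs + q) ⬝ᵥ (x - xs)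
      = -(yI ⬝ᵥ (G.mulVec x - G.mulVec xs)) - yE ⬝ᵥ (A.mulVec x - A.mulVec xs) := by
    rw [hstat', sub_dotProduct, neg_dotProduct, mulVec_transpose, mulVec_transpose,
      ← dotProduct_mulVec, ← dotProduct_mulVec, mulVec_sub, mulVec_sub]
  -- bound the inequality dual term
  have hI : yI ⬝ᵥ (G.mulVec x - G.mulVec xs) ≤ ∑ i, μI i * max (G.mulVec x i - h i) 0 := by
    rw [dotProduct]
    apply Finset.sum_le_sum
    intro i _
    have h1 := hcs i
    have h2 := hyI i
    have h3 := hμI i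
    rw [abs_of_nonneg h2] at h3
    simp only [Pi.sub_apply]
    rcases le_total (G.mulVec x i - h i) 0 with hc | hc
    · rw [max_eq_right hc]; nlinarith
    · rw [max_eq_left hc]; nlinarith
  -- bound the equality dual term
  have hE : yE ⬝ᵥ (A.mulVec x - A.mulVec xs) ≤ ∑ j, μE j * |A.mulVec x j - b j| := by
    rw [dotProduct, hfeasE]
    apply Finset.sum_le_sum
    intro j _
    have h3 := hμE j
    simp only [Pi.sub_apply]
    calc yE j * (A.mulVec x j - b j) ≤ |yE j * (A.mulVec x j - b j)| := le_abs_self _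
      _ = |yE j| * |A.mulVec x j - b j| := abs_mul _ _
      _ ≤ μE j * |A.mulVec x j - b j| := by
          exact mul_le_mul_of_nonneg_right h3 (abs_nonneg _)
  -- penalties vanish at xs
  have hz1 : (∑ i, μI i * max (G.mulVec xs i - h i) 0) = 0 := by
    apply Finset.sum_eq_zero
    intro i _
    rw [max_eq_right (by linarith [hfeasI i])]
    ring
  have hz2 : (∑ j, μE j * |A.mulVec xs j - b j|) = 0 := by
    apply Finset.sum_eq_zero
    intro j _
    rw [hfeasE]
    simp
  rw [hz1, hz2]
  rw [hdot] at hconv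
  linarith
end
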